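/- Let P be an adapted paracomplex structure on (V,⟨·,·⟩), let κ₀ ≠ 0 and κ_P ≠ 0, and let A = κ₀A⁰ + κ_PA^P. Then the model 𝔐 = (V,⟨·,·⟩,A) is not null Jordan Osserman; indeed there exist nonzero null vectors u, v with rank(J_A(u)) ≤ 1 and rank(J_A(v)) = 2 (for the standard adapted paracomplex structure one may take u with Pu = u, e.g. u = e₁ + Pe₁, and v = e₁ + e₄). -/

import Mathlib

open Matrix BigOperators

/-- `V = ℝ⁴`. -/
abbrev V4 : Type := Fin 4 → ℝ

/-- The neutral inner product of signature (2,2):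
`⟨x,y⟩ = −x₁y₁ − x₂y₂ + x₃y₃ + x₄y₄`. -/
def nip (x y : V4) : ℝ := -(x 0 * y 0) - x 1 * y 1 + x 2 * y 2 + x 3 * y 3

/-- The signs `ε₁ = ε₂ = −1`, `ε₃ = ε₄ = 1`. -/
def eps : Fin 4 → ℝ := ![-1, -1, 1, 1]

/-- The standard basis vectors `e i`. -/
def stdb (i : Fin 4) : V4 := fun j => if j = i then 1 else 0

/-- A 4-linear map `A : V⁴ → ℝ` (linearity in each slot). -/
def IsMultilinear (A : V4 → V4 → V4 → V4 → ℝ) : Prop :=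
  (∀ (c : ℝ) (x x' y z w : V4), A (c • x + x') y z w = c * A x y z w + A x' y z w) ∧
  (∀ (c : ℝ) (x y y' z w : V4), A x (c • y + y') z w = c * A x y z w + A x y' z w) ∧
  (∀ (c : ℝ) (x y z z' w : V4), A x y (c • z + z') w = c * A x y z w + A x y z' w) ∧
  (∀ (c : ℝ) (x y z w w' : V4), A x y z (c • w + w') = c * A x y z w + A x y z w')

/-- Curvature symmetries:
`A(x,y,z,v) = −A(y,x,z,v) = A(z,v,x,y)` and the first Bianchi identity. -/
def HasCurvSym (A : V4 → V4 → V4 → V4 → ℝ) : Prop :=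
  (∀ x y z w, A x y z w = - A y x z w) ∧
  (∀ x y z w, A x y z w = A z w x y) ∧
  (∀ x y z w, A x y z w + A y z x w + A z x y w = 0)

/-- An algebraic curvature tensor on `(V,⟨·,·⟩)`. -/
def IsModel (A : V4 → V4 → V4 → V4 → ℝ) : Prop := IsMultilinear A ∧ HasCurvSym A

/-- The Jacobi operator `J_A(x)`, as a matrix: it is the unique linear map with
`⟨J_A(x)y, z⟩ = A(y,x,x,z)`; its matrix entries are `J i j = ε i * A(e j, x, x, e i)`. -/
def jacobi (A : V4 → V4 → V4 → V4 → ℝ) (x : V4) : Matrix (Fin 4) (Fin 4) ℝ :=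
  Matrix.of fun i j => eps i * A (stdb j) x x (stdb i)

/-- Two endomorphisms of `V` are similar (conjugate by an invertible linear map). -/
def Similar4 (M N : Matrix (Fin 4) (Fin 4) ℝ) : Prop :=
  ∃ L : Matrix (Fin 4) (Fin 4) ℝ, IsUnit L.det ∧ M * L = L * N

/-- Spacelike Osserman: the characteristic polynomial of `J_A` is constant on
unit spacelike vectors. -/
def SpacelikeOsserman (A : V4 → V4 → V4 → V4 → ℝ) : Prop :=
  ∀ u w : V4, nip u u = 1 → nip w w = 1 → (jacobi A u).charpoly = (jacobi A w).charpoly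

/-- Timelike Osserman: the characteristic polynomial of `J_A` is constant on
unit timelike vectors. -/
def TimelikeOsserman (A : V4 → V4 → V4 → V4 → ℝ) : Prop :=
  ∀ u w : V4, nip u u = -1 → nip w w = -1 → (jacobi A u).charpoly = (jacobi A w).charpoly

/-- Null Osserman: `J_A(v)` is nilpotent for every null vector `v`. -/
def NullOsserman (A : V4 → V4 → V4 → V4 → ℝ) : Prop :=
  ∀ v : V4, nip v v = 0 → IsNilpotent (jacobi A v)

/-- Spacelike Jordan Osserman: the Jordan normal form of `J_A` is constant on
unit spacelike vectors. -/
def SpacelikeJordanOsserman (A : V4 → V4 → V4 → V4 → ℝ) : Prop :=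
  ∀ u w : V4, nip u u = 1 → nip w w = 1 → Similar4 (jacobi A u) (jacobi A w)

/-- Timelike Jordan Osserman. -/
def TimelikeJordanOsserman (A : V4 → V4 → V4 → V4 → ℝ) : Prop :=
  ∀ u w : V4, nip u u = -1 → nip w w = -1 → Similar4 (jacobi A u) (jacobi A w)

/-- Null Jordan Osserman: the Jordan normal form of `J_A` is constant on
nonzero null vectors. -/
def NullJordanOsserman (A : V4 → V4 → V4 → V4 → ℝ) : Prop :=
  ∀ u w : V4, u ≠ 0 → w ≠ 0 → nip u u = 0 → nip w w = 0 →
    Similar4 (jacobi A u) (jacobi A w)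

/-- The Ricci tensor `ρ_A(x,y) = Σᵢ εᵢ A(eᵢ,x,y,eᵢ)`. -/
def ricci (A : V4 → V4 → V4 → V4 → ℝ) (x y : V4) : ℝ :=
  ∑ i : Fin 4, eps i * A (stdb i) x y (stdb i)

/-- Einstein: `ρ_A = c⟨·,·⟩`. -/
def Einstein (A : V4 → V4 → V4 → V4 → ℝ) : Prop :=
  ∃ c : ℝ, ∀ x y : V4, ricci A x y = c * nip x y

/-- The scalar curvature `τ_A = Σᵢ εᵢ ρ_A(eᵢ,eᵢ)`. -/
def scal (A : V4 → V4 → V4 → V4 → ℝ) : ℝ :=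
  ∑ i : Fin 4, eps i * ricci A (stdb i) (stdb i)

/-- The Weyl tensor. -/
noncomputable def weyl (A : V4 → V4 → V4 → V4 → ℝ) (x y z v : V4) : ℝ :=
  A x y z v + (scal A / 6) * (nip y z * nip x v - nip x z * nip y v)
    - (1/2) * (ricci A y z * nip x v - ricci A x z * nip y v
        + ricci A x v * nip y z - ricci A y v * nip x z)

/-- A 2-vector `x ∧ y`, represented by its antisymmetric coefficient matrix. -/
def wedge (x y : V4) : Matrix (Fin 4) (Fin 4) ℝ :=
  Matrix.of fun i j => x i * y j - x j * y i

/-- The Weyl tensor as a symmetric bilinear form on 2-vectors, determined by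
`W_A(x∧y, z∧v) = W_A(x,y,z,v)`. -/
noncomputable def weylForm (A : V4 → V4 → V4 → V4 → ℝ) (α β : Matrix (Fin 4) (Fin 4) ℝ) : ℝ :=
  (1/4) * ∑ i : Fin 4, ∑ j : Fin 4, ∑ k : Fin 4, ∑ l : Fin 4,
    α i j * β k l * weyl A (stdb i) (stdb j) (stdb k) (stdb l)

/-- `E₁^ε = (1/√2)(e₁∧e₂ + ε e₃∧e₄)`, `E₂^ε = (1/√2)(e₁∧e₃ + ε e₂∧e₄)`,
`E₃^ε = (1/√2)(e₁∧e₄ − ε e₂∧e₃)`.  For `ε = 1` this is the standard basis of the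
self-dual 2-vectors `Λ⁺`; for `ε = −1`, of the anti-self-dual 2-vectors `Λ⁻`. -/
noncomputable def Evec (ε : ℝ) : Fin 3 → Matrix (Fin 4) (Fin 4) ℝ :=
  ![(Real.sqrt 2)⁻¹ • (wedge (stdb 0) (stdb 1) + ε • wedge (stdb 2) (stdb 3)),
    (Real.sqrt 2)⁻¹ • (wedge (stdb 0) (stdb 2) + ε • wedge (stdb 1) (stdb 3)),
    (Real.sqrt 2)⁻¹ • (wedge (stdb 0) (stdb 3) - ε • wedge (stdb 1) (stdb 2))]

/-- The space `Λ⁺` of self-dual 2-vectors. -/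
def LambdaPlus : Submodule ℝ (Matrix (Fin 4) (Fin 4) ℝ) :=
  Submodule.span ℝ (Set.range (Evec 1))

/-- The space `Λ⁻` of anti-self-dual 2-vectors. -/
def LambdaMinus : Submodule ℝ (Matrix (Fin 4) (Fin 4) ℝ) :=
  Submodule.span ℝ (Set.range (Evec (-1)))

/-- Self-dual: the Weyl form vanishes identically on `Λ⁻`. -/
def SelfDual (A : V4 → V4 → V4 → V4 → ℝ) : Prop :=
  ∀ α ∈ LambdaMinus, ∀ β ∈ LambdaMinus, weylForm A α β = 0

/-- Anti-self-dual: the Weyl form vanishes identically on `Λ⁺`. -/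
def AntiSelfDual (A : V4 → V4 → V4 → V4 → ℝ) : Prop :=
  ∀ α ∈ LambdaPlus, ∀ β ∈ LambdaPlus, weylForm A α β = 0

/-- The curvature tensor `A⁰` of constant sectional curvature `+1`. -/
def Acurv0 (x y z v : V4) : ℝ := nip y z * nip x v - nip x z * nip y v

/-- The curvature tensor `A^Ψ` of a skew-adjoint endomorphism `Ψ`. -/
def AcurvPsi (Ψ : Matrix (Fin 4) (Fin 4) ℝ) (x y z v : V4) : ℝ :=
  nip (Ψ.mulVec y) z * nip (Ψ.mulVec x) v - nip (Ψ.mulVec x) z * nip (Ψ.mulVec y) v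
    - 2 * nip (Ψ.mulVec x) y * nip (Ψ.mulVec z) v

/-- Skew-adjoint with respect to the neutral inner product. -/
def SkewAdjointM (Ψ : Matrix (Fin 4) (Fin 4) ℝ) : Prop :=
  ∀ x y : V4, nip (Ψ.mulVec x) y = - nip x (Ψ.mulVec y)

/-- An orthogonal complex structure: skew-adjoint with `J² = −id`. -/
def OrthComplexStructure (J : Matrix (Fin 4) (Fin 4) ℝ) : Prop :=
  SkewAdjointM J ∧ J * J = -1

/-- An adapted paracomplex structure: skew-adjoint with `P² = id`. -/
def AdaptedParaStructure (P : Matrix (Fin 4) (Fin 4) ℝ) : Prop :=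
  SkewAdjointM P ∧ P * P = 1

/-- A paraquaternionic structure. -/
def Paraquaternionic (P₁ P₂ P₃ : Matrix (Fin 4) (Fin 4) ℝ) : Prop :=
  SkewAdjointM P₁ ∧ SkewAdjointM P₂ ∧ SkewAdjointM P₃ ∧
  P₁ * P₁ = -1 ∧ P₂ * P₂ = 1 ∧ P₃ * P₃ = 1 ∧
  P₁ * P₂ + P₂ * P₁ = 0 ∧ P₁ * P₃ + P₃ * P₁ = 0 ∧ P₂ * P₃ + P₃ * P₂ = 0

/-- The standard paraquaternionic structure: `Ψ₁`. -/
def psi1 : Matrix (Fin 4) (Fin 4) ℝ :=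
  !![0, 1, 0, 0; -1, 0, 0, 0; 0, 0, 0, -1; 0, 0, 1, 0]

/-- The standard paraquaternionic structure: `Ψ₂`. -/
def psi2 : Matrix (Fin 4) (Fin 4) ℝ :=
  !![0, 0, 1, 0; 0, 0, 0, 1; 1, 0, 0, 0; 0, 1, 0, 0]

/-- The standard paraquaternionic structure: `Ψ₃`. -/
def psi3 : Matrix (Fin 4) (Fin 4) ℝ :=
  !![0, 0, 0, 1; 0, 0, -1, 0; 0, -1, 0, 0; 1, 0, 0, 0]

/-- The curvature tensor `A_{κ₀,ξ}` of the Gilkey–Ivanova ansatz. -/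
noncomputable def AKxi (κ₀ ξ11 ξ12 ξ13 ξ22 ξ23 ξ33 : ℝ) : V4 → V4 → V4 → V4 → ℝ :=
  fun x y z w =>
    κ₀ * Acurv0 x y z w + (1/3) *
      (ξ11 * AcurvPsi psi1 x y z w + ξ22 * AcurvPsi psi2 x y z w
        + ξ33 * AcurvPsi psi3 x y z w + ξ12 * AcurvPsi (psi1 + psi2) x y z w
        + ξ13 * AcurvPsi (psi1 + psi3) x y z w + ξ23 * AcurvPsi (psi2 + psi3) x y z w)

/-- The `3 × 3` matrix `𝒥_{κ₀,ξ}`. -/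
def Jmat (κ₀ ξ11 ξ12 ξ13 ξ22 ξ23 ξ33 : ℝ) : Matrix (Fin 3) (Fin 3) ℝ :=
  κ₀ • (1 : Matrix (Fin 3) (Fin 3) ℝ) +
    !![ξ11 + ξ12 + ξ13, -ξ12, -ξ13;
       ξ12, -ξ22 - ξ12 - ξ23, -ξ23;
       ξ13, -ξ23, -ξ33 - ξ13 - ξ23]

/-- An oriented orthonormal basis of `(V,⟨·,·⟩)`: `b₁, b₂` timelike, `b₃, b₄` spacelike,
mutually orthogonal, with positively-oriented change-of-basis matrix. -/
def OrientedONB (b : Fin 4 → V4) : Prop :=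
  (∀ i j : Fin 4, nip (b i) (b j) = if i = j then eps i else 0) ∧
  0 < (Matrix.of fun i j : Fin 4 => b j i).det

lemma njo_eps_sq (i : Fin 4) : eps i * eps i = 1 := by fin_cases i <;> norm_num [eps]
lemma njo_nip_comm (x y : V4) : nip x y = nip y x := by unfold nip; ring
lemma njo_nip_stdb (w : V4) (i : Fin 4) : nip w (stdb i) = eps i * w i := by
  fin_cases i <;> simp +decide [nip, stdb, eps]
lemma njo_skew_self (P : Matrix (Fin 4) (Fin 4) ℝ) (hsk : SkewAdjointM P) (x : V4) :
    nip (P.mulVec x) x = 0 := by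
  have h1 := hsk x x
  have h2 := njo_nip_comm x (P.mulVec x)
  linarith
lemma njo_jacobi_entry (P : Matrix (Fin 4) (Fin 4) ℝ) (hsk : SkewAdjointM P)
    (κ₀ κP : ℝ) (x : V4) (hx : nip x x = 0) (i j : Fin 4) :
    jacobi (fun x y z w => κ₀ * Acurv0 x y z w + κP * AcurvPsi P x y z w) x i j
      = eps j * (-κ₀ * (x j * x i) + 3 * κP * (P.mulVec x j * P.mulVec x i)) := by
  have hpx : nip (P.mulVec x) x = 0 := njo_skew_self P hsk x
  have h1 : nip (stdb j) x = eps j * x j := by rw [njo_nip_comm, njo_nip_stdb]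
  have h2 : nip x (stdb i) = eps i * x i := njo_nip_stdb x i
  have h3 : nip (P.mulVec (stdb j)) x = -(eps j * P.mulVec x j) := by
    rw [hsk, njo_nip_comm, njo_nip_stdb]
  have h4 : nip (P.mulVec x) (stdb i) = eps i * P.mulVec x i := njo_nip_stdb _ i
  simp only [jacobi, Matrix.of_apply, Acurv0, AcurvPsi]
  rw [hx, hpx, h1, h2, h3, h4]
  linear_combination (eps j * (-κ₀ * (x j * x i) + 3 * κP * (P.mulVec x j * P.mulVec x i))) * njo_eps_sq i
lemma njo_jacobi_mulVec (P : Matrix (Fin 4) (Fin 4) ℝ) (hsk : SkewAdjointM P)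
    (κ₀ κP : ℝ) (x : V4) (hx : nip x x = 0) (y : V4) :
    (jacobi (fun x y z w => κ₀ * Acurv0 x y z w + κP * AcurvPsi P x y z w) x).mulVec y
      = (-κ₀ * nip x y) • x + (3 * κP * nip (P.mulVec x) y) • P.mulVec x := by
  have hE := njo_jacobi_entry P hsk κ₀ κP x hx
  funext i
  rw [show (jacobi (fun x y z w => κ₀ * Acurv0 x y z w + κP * AcurvPsi P x y z w) x).mulVec y i
      = ∑ j, jacobi (fun x y z w => κ₀ * Acurv0 x y z w + κP * AcurvPsi P x y z w) x i j * y j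
      from rfl, Fin.sum_univ_four, hE i 0, hE i 1, hE i 2, hE i 3]
  simp only [Pi.add_apply, Pi.smul_apply, smul_eq_mul, nip, eps]
  norm_num [Matrix.cons_val_zero, Matrix.cons_val_one, Matrix.head_cons, Matrix.cons_val_two, Matrix.cons_val_three, Matrix.tail_cons]
  ring
lemma njo_eps_ne (i : Fin 4) : eps i ≠ 0 := by fin_cases i <;> norm_num [eps]
lemma njo_n22 : nip (stdb 2) (stdb 2) = 1 := by simp +decide [nip, stdb]
lemma njo_n33 : nip (stdb 3) (stdb 3) = 1 := by simp +decide [nip, stdb]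
lemma njo_n23 : nip (stdb 2) (stdb 3) = 0 := by simp +decide [nip, stdb]
lemma njo_n32 : nip (stdb 3) (stdb 2) = 0 := by simp +decide [nip, stdb]
lemma njo_nip_add_left (x y z : V4) : nip (x + y) z = nip x z + nip y z := by
  simp only [nip, Pi.add_apply]; ring
lemma njo_nip_sub_left (x y z : V4) : nip (x - y) z = nip x z - nip y z := by
  simp only [nip, Pi.sub_apply]; ring
lemma njo_nip_smul_left (c : ℝ) (x z : V4) : nip (c • x) z = c * nip x z := by
  simp only [nip, Pi.smul_apply, smul_eq_mul]; ring
lemma njo_nip_add_right (x y z : V4) : nip x (y + z) = nip x y + nip x z := by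
  simp only [nip, Pi.add_apply]; ring
lemma njo_nip_sub_right (x y z : V4) : nip x (y - z) = nip x y - nip x z := by
  simp only [nip, Pi.sub_apply]; ring
lemma njo_nip_smul_right (c : ℝ) (x z : V4) : nip x (c • z) = c * nip x z := by
  simp only [nip, Pi.smul_apply, smul_eq_mul]; ring
lemma njo_nip_zero_left (z : V4) : nip 0 z = 0 := by simp [nip]
lemma njo_PP (P : Matrix (Fin 4) (Fin 4) ℝ) (hsq : P * P = 1) (x : V4) :
    P.mulVec (P.mulVec x) = x := by
  rw [Matrix.mulVec_mulVec, hsq, Matrix.one_mulVec]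
lemma njo_nip_PP (P : Matrix (Fin 4) (Fin 4) ℝ) (hsk : SkewAdjointM P) (hsq : P * P = 1)
    (x y : V4) : nip (P.mulVec x) (P.mulVec y) = - nip x y := by
  rw [hsk, njo_PP P hsq]
lemma njo_rank_le_one (M : Matrix (Fin 4) (Fin 4) ℝ) (u : V4)
    (h : ∀ y : V4, ∃ a : ℝ, M.mulVec y = a • u) : M.rank ≤ 1 := by
  rw [Matrix.rank]
  have hle : LinearMap.range M.mulVecLin ≤ Submodule.span ℝ (Set.range ![u]) := by
    rintro w ⟨y, rfl⟩
    obtain ⟨a, hab⟩ := h y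
    rw [Matrix.mulVecLin_apply, hab]
    exact Submodule.smul_mem _ _ (Submodule.subset_span ⟨0, rfl⟩)
  exact le_trans (Submodule.finrank_mono hle) (le_trans (finrank_range_le_card ![u]) (by norm_num))
lemma njo_rank_le_two (M : Matrix (Fin 4) (Fin 4) ℝ) (v p : V4)
    (h : ∀ y : V4, ∃ a b : ℝ, M.mulVec y = a • v + b • p) : M.rank ≤ 2 := by
  rw [Matrix.rank]
  have hle : LinearMap.range M.mulVecLin ≤ Submodule.span ℝ (Set.range ![v, p]) := by
    rintro w ⟨y, rfl⟩
    obtain ⟨a, b, hab⟩ := h y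
    rw [Matrix.mulVecLin_apply, hab]
    exact Submodule.add_mem _
      (Submodule.smul_mem _ _ (Submodule.subset_span ⟨0, rfl⟩))
      (Submodule.smul_mem _ _ (Submodule.subset_span ⟨1, rfl⟩))
  exact le_trans (Submodule.finrank_mono hle) (le_trans (finrank_range_le_card ![v, p]) (by norm_num))
lemma njo_two_le_rank (M : Matrix (Fin 4) (Fin 4) ℝ) (y1 y2 : V4)
    (h : LinearIndependent ℝ ![M.mulVec y1, M.mulVec y2]) : 2 ≤ M.rank := by
  rw [Matrix.rank]
  have hle : Submodule.span ℝ (Set.range ![M.mulVec y1, M.mulVec y2])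
      ≤ LinearMap.range M.mulVecLin := by
    rw [Submodule.span_le]
    rintro w ⟨k, rfl⟩
    fin_cases k
    · exact ⟨y1, by simp [Matrix.mulVecLin_apply]⟩
    · exact ⟨y2, by simp [Matrix.mulVecLin_apply]⟩
  have h2 := Submodule.finrank_mono hle
  rwa [finrank_span_eq_card h, Fintype.card_fin] at h2
lemma njo_rank_eq_of_similar (M N : Matrix (Fin 4) (Fin 4) ℝ) (hS : Similar4 M N) :
    M.rank = N.rank := by
  obtain ⟨L, hL, hEq⟩ := hS
  rw [← Matrix.rank_mul_eq_left_of_isUnit_det L M hL, hEq,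
    Matrix.rank_mul_eq_right_of_isUnit_det L N hL]

/-- Section 3.4: for `A = κ₀A⁰ + κ_P A^P` with `P` an adapted paracomplex structure,
`κ₀ ≠ 0` and `κ_P ≠ 0`, the model is not null Jordan Osserman: there are nonzero null
vectors `u, v` with `rank J_A(u) ≤ 1` and `rank J_A(v) = 2`. -/
theorem paracomplex_not_null_jordan_osserman (P : Matrix (Fin 4) (Fin 4) ℝ)
    (hP : AdaptedParaStructure P) (κ₀ κP : ℝ) (hκ₀ : κ₀ ≠ 0) (hκP : κP ≠ 0)
    (A : V4 → V4 → V4 → V4 → ℝ)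
    (hA : A = fun x y z w => κ₀ * Acurv0 x y z w + κP * AcurvPsi P x y z w) :
    (¬ NullJordanOsserman A) ∧
    ∃ u v : V4, u ≠ 0 ∧ v ≠ 0 ∧ nip u u = 0 ∧ nip v v = 0 ∧
      (jacobi A u).rank ≤ 1 ∧ (jacobi A v).rank = 2 := by
  obtain ⟨hsk, hsq⟩ := hP
  subst hA
  set J : V4 → Matrix (Fin 4) (Fin 4) ℝ :=
    jacobi (fun x y z w => κ₀ * Acurv0 x y z w + κP * AcurvPsi P x y z w) with hJdef
  have hJ : ∀ x : V4, nip x x = 0 → ∀ y : V4,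
      (J x).mulVec y = (-κ₀ * nip x y) • x + (3 * κP * nip (P.mulVec x) y) • P.mulVec x := by
    intro x hx y
    rw [hJdef]
    exact njo_jacobi_mulVec P hsk κ₀ κP x hx y
  have hPP2 : ∀ x y : V4, nip (P.mulVec x) (P.mulVec y) = - nip x y := njo_nip_PP P hsk hsq
  set r : ℝ := nip (P.mulVec (stdb 2)) (stdb 3) with hr
  set u : V4 := stdb 2 + P.mulVec (stdb 2) with hu
  set b1 : V4 := stdb 2 - P.mulVec (stdb 2) with hb1
  set b2 : V4 := stdb 3 - P.mulVec (stdb 3) with hb2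
  set a2 : V4 := stdb 3 + P.mulVec (stdb 3) with ha2
  set um : V4 := r • b1 - b2 with hum
  set v : V4 := u + um with hv
  set pv : V4 := u - um with hpv
  -- atomic inner products
  have hq2 : nip (P.mulVec (stdb 2)) (stdb 2) = 0 := njo_skew_self P hsk _
  have hq2' : nip (stdb 2) (P.mulVec (stdb 2)) = 0 := by rw [njo_nip_comm]; exact hq2
  have hq3 : nip (P.mulVec (stdb 3)) (stdb 3) = 0 := njo_skew_self P hsk _
  have hq3' : nip (stdb 3) (P.mulVec (stdb 3)) = 0 := by rw [njo_nip_comm]; exact hq3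
  have hqq22 : nip (P.mulVec (stdb 2)) (P.mulVec (stdb 2)) = -1 := by rw [hPP2, njo_n22]
  have hqq33 : nip (P.mulVec (stdb 3)) (P.mulVec (stdb 3)) = -1 := by rw [hPP2, njo_n33]
  have hqq23 : nip (P.mulVec (stdb 2)) (P.mulVec (stdb 3)) = 0 := by rw [hPP2, njo_n23, neg_zero]
  have hqq32 : nip (P.mulVec (stdb 3)) (P.mulVec (stdb 2)) = 0 := by rw [hPP2, njo_n32, neg_zero]
  have hrA : nip (P.mulVec (stdb 2)) (stdb 3) = r := hr.symm
  have hrB : nip (stdb 3) (P.mulVec (stdb 2)) = r := by rw [njo_nip_comm]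
  have hrC : nip (P.mulVec (stdb 3)) (stdb 2) = -r := by rw [hsk, hrB]
  have hrD : nip (stdb 2) (P.mulVec (stdb 3)) = -r := by rw [njo_nip_comm]; exact hrC
  -- derived inner products
  have F1 : nip u b1 = 2 := by
    rw [hu, hb1]
    simp only [njo_nip_add_left, njo_nip_sub_right]
    simp only [njo_n22, hq2, hq2', hqq22]; ring
  have F2 : nip um b1 = 0 := by
    rw [hum, hb1, hb2]
    simp only [njo_nip_sub_left, njo_nip_smul_left, njo_nip_sub_right]
    simp only [njo_n22, njo_n32, hq2, hq2', hqq22, hrB, hqq32, hrC]; ring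
  have F3 : nip u a2 = 0 := by
    rw [hu, ha2]
    simp only [njo_nip_add_left, njo_nip_add_right]
    simp only [njo_n23, hrD, hrA, hqq23]; ring
  have F4 : nip um a2 = -2*r*r - 2 := by
    rw [hum, hb1, hb2, ha2]
    simp only [njo_nip_sub_left, njo_nip_smul_left, njo_nip_add_right]
    simp only [njo_n23, njo_n33, hrD, hrA, hqq23, hq3', hq3, hqq33]; ring
  have F5 : nip u u = 0 := by
    rw [hu]
    simp only [njo_nip_add_left, njo_nip_add_right]
    simp only [njo_n22, hq2, hq2', hqq22]; ring
  have F6 : nip u um = 0 := by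
    rw [hu, hum, hb1, hb2]
    simp only [njo_nip_add_left, njo_nip_sub_right, njo_nip_smul_right, njo_nip_sub_left,
      njo_nip_smul_left]
    simp only [njo_n22, njo_n23, hq2, hq2', hqq22, hrA, hrB, hrD, hqq23]; ring
  have F6' : nip um u = 0 := by rw [njo_nip_comm]; exact F6
  have F7 : nip um um = 0 := by
    rw [hum, hb1, hb2]
    simp only [njo_nip_sub_left, njo_nip_smul_left, njo_nip_sub_right, njo_nip_smul_right]
    simp only [njo_n22, njo_n23, njo_n32, njo_n33, hq2, hq2', hq3, hq3', hqq22, hqq33,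
      hqq23, hqq32, hrA, hrB, hrC, hrD]; ring
  -- P action
  have hPu : P.mulVec u = u := by
    rw [hu, Matrix.mulVec_add, njo_PP P hsq]
    exact add_comm _ _
  have hPum : P.mulVec um = -um := by
    rw [hum, hb1, hb2, Matrix.mulVec_sub, Matrix.mulVec_smul, Matrix.mulVec_sub,
      Matrix.mulVec_sub, njo_PP P hsq, njo_PP P hsq]
    module
  have hPv : P.mulVec v = pv := by
    rw [hv, hpv, Matrix.mulVec_add, hPu, hPum]
    module
  -- null and nonzero
  have hnu : nip u u = 0 := F5
  have hnv : nip v v = 0 := by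
    rw [hv]
    simp only [njo_nip_add_left, njo_nip_add_right]
    rw [F5, F6, F6', F7]; ring
  have hu0 : u ≠ 0 := by
    intro h
    rw [h, njo_nip_zero_left] at F1
    norm_num at F1
  have hvb1 : nip v b1 = 2 := by
    rw [hv, njo_nip_add_left, F1, F2]; ring
  have hv0 : v ≠ 0 := by
    intro h
    rw [h, njo_nip_zero_left] at hvb1
    norm_num at hvb1
  -- linear independence of u, um and of v, pv
  have huum : ∀ c d : ℝ, c • u + d • um = 0 → c = 0 ∧ d = 0 := by
    intro c d h
    have e1 : c * nip u b1 + d * nip um b1 = 0 := by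
      have := congrArg (fun w : V4 => nip w b1) h
      simpa only [njo_nip_add_left, njo_nip_smul_left, njo_nip_zero_left] using this
    have e2 : c * nip u a2 + d * nip um a2 = 0 := by
      have := congrArg (fun w : V4 => nip w a2) h
      simpa only [njo_nip_add_left, njo_nip_smul_left, njo_nip_zero_left] using this
    rw [F1, F2] at e1
    rw [F3, F4] at e2
    have hc : c = 0 := by linarith
    refine ⟨hc, ?_⟩
    have hd : d * (2*r*r + 2) = 0 := by linarith
    have hpos : 0 < 2*r*r + 2 := by nlinarith [mul_self_nonneg r]
    exact (mul_eq_zero.mp hd).resolve_right (ne_of_gt hpos)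
  have hvp : ∀ c d : ℝ, c • v + d • pv = 0 → c = 0 ∧ d = 0 := by
    intro c d h
    rw [hv, hpv] at h
    have h2 : (c + d) • u + (c - d) • um = 0 := by rw [← h]; module
    obtain ⟨h3, h4⟩ := huum _ _ h2
    constructor <;> linarith
  -- rank of J u is at most 1
  have hrank_u : (J u).rank ≤ 1 := by
    apply njo_rank_le_one _ u
    intro y
    refine ⟨-κ₀ * nip u y + 3 * κP * nip u y, ?_⟩
    rw [hJ u hnu y, hPu]
    module
  -- rank of J v is at most 2
  have hrank_v_le : (J v).rank ≤ 2 := by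
    apply njo_rank_le_two _ v pv
    intro y
    exact ⟨-κ₀ * nip v y, 3 * κP * nip pv y, by rw [hJ v hnv y, hPv]⟩
  -- a nonzero 2x2 minor of the pair (v, pv)
  obtain ⟨i0, hi0⟩ : ∃ i0 : Fin 4, v i0 ≠ 0 := by
    by_contra hc; push_neg at hc; exact hv0 (funext fun i => hc i)
  obtain ⟨iA, iB, hm⟩ : ∃ iA iB : Fin 4, v iA * pv iB - v iB * pv iA ≠ 0 := by
    by_contra hc; push_neg at hc
    have h0 : (pv i0) • v + (-(v i0)) • pv = 0 := by
      funext j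
      simp only [Pi.add_apply, Pi.smul_apply, smul_eq_mul, Pi.zero_apply]
      linear_combination -(hc i0 j)
    have := (hvp _ _ h0).2
    exact hi0 (by linarith)
  -- rank of J v is at least 2
  have hwind : LinearIndependent ℝ ![(J v).mulVec (stdb iA), (J v).mulVec (stdb iB)] := by
    rw [LinearIndependent.pair_iff]
    intro s t hst
    rw [hJ v hnv (stdb iA), hJ v hnv (stdb iB), hPv,
        njo_nip_stdb v iA, njo_nip_stdb pv iA, njo_nip_stdb v iB, njo_nip_stdb pv iB] at hst
    have hcomb : (s * (-κ₀ * (eps iA * v iA)) + t * (-κ₀ * (eps iB * v iB))) • v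
        + (s * (3 * κP * (eps iA * pv iA)) + t * (3 * κP * (eps iB * pv iB))) • pv = 0 := by
      rw [← hst]; module
    obtain ⟨h1, h2⟩ := hvp _ _ hcomb
    have hsz : s * (-3 * κ₀ * κP * eps iA * eps iB * (v iA * pv iB - v iB * pv iA)) = 0 := by
      linear_combination (3 * κP * (eps iB * pv iB)) * h1 + (κ₀ * (eps iB * v iB)) * h2
    have htz : t * (-3 * κ₀ * κP * eps iA * eps iB * (v iA * pv iB - v iB * pv iA)) = 0 := by
      linear_combination (-(3 * κP * (eps iA * pv iA))) * h1 + (-(κ₀ * (eps iA * v iA))) * h2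
    have hX : (-3 * κ₀ * κP * eps iA * eps iB * (v iA * pv iB - v iB * pv iA)) ≠ 0 := by
      refine mul_ne_zero (mul_ne_zero (mul_ne_zero (mul_ne_zero ?_ hκP) (njo_eps_ne iA))
        (njo_eps_ne iB)) hm
      exact mul_ne_zero (by norm_num) hκ₀
    exact ⟨(mul_eq_zero.mp hsz).resolve_right hX, (mul_eq_zero.mp htz).resolve_right hX⟩
  have hrank_v : (J v).rank = 2 :=
    le_antisymm hrank_v_le (njo_two_le_rank _ _ _ hwind)
  refine ⟨?_, u, v, hu0, hv0, hnu, hnv, hrank_u, hrank_v⟩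
  intro hN
  have hS := hN u v hu0 hv0 hnu hnv
  have heq := njo_rank_eq_of_similar _ _ hS
  rw [← hJdef] at heq
  rw [hrank_v] at heq
  omega
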